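/- Let n ≥ 1 and let f : ℝ → ℝ be continuous, odd and strictly increasing (so f(0) = 0). In the space ℝ × Sym(n), where Sym(n) denotes the real vector space of symmetric n × n real matrices with its natural topology, consider F = {(r, A) : f(r) ≤ trace(A)}. Then F is self-dual: its Harvey–Lawson dual F̃ := {(r, A) : (−r, −A) ∉ interior F} equals F. -/
import Mathlib


/-- `SymMat n` is the real vector space of symmetric `n × n` real matrices (self-adjoint
matrices, since `star` is transposition for real matrices), with its natural topology. -/
abbrev SymMat (n : ℕ) : Type := ↥(selfAdjoint (Matrix (Fin n) (Fin n) ℝ))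

/-- For `f : ℝ → ℝ` continuous, odd and strictly increasing, the subequation
`F = {(r, A) : f r ≤ tr A}` in `ℝ × SymMat n` is self-dual: its Harvey–Lawson dual
`F̃ = {(r, A) : (-r, -A) ∉ interior F}` equals `F`. -/
theorem trace_subequation_selfdual (n : ℕ) (hn : 1 ≤ n) (f : ℝ → ℝ)
    (hcont : Continuous f) (hodd : ∀ r : ℝ, f (-r) = -f r) (hmono : StrictMono f) :
    {x : ℝ × SymMat n | (-x.1, -x.2) ∉
        interior {y : ℝ × SymMat n | f y.1 ≤ Matrix.trace (y.2 : Matrix (Fin n) (Fin n) ℝ)}} =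
      {y : ℝ × SymMat n | f y.1 ≤ Matrix.trace (y.2 : Matrix (Fin n) (Fin n) ℝ)} := by
  set F : Set (ℝ × SymMat n) :=
    {y : ℝ × SymMat n | f y.1 ≤ Matrix.trace (y.2 : Matrix (Fin n) (Fin n) ℝ)} with hF
  have E : SymMat n := ⟨(1 : Matrix (Fin n) (Fin n) ℝ), IsSelfAdjoint.one _⟩
  ext ⟨r, A⟩
  simp only [Set.mem_setOf_eq, hF]
  constructor
  · -- dual ⊆ F : contrapositive
    intro h
    by_contra hlt
    push_neg at hlt
    apply h
    -- the open set {f y.1 < tr y.2} is contained in F and contains (-r, -A)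
    have hopen : IsOpen {y : ℝ × SymMat n |
        f y.1 < Matrix.trace (y.2 : Matrix (Fin n) (Fin n) ℝ)} := by
      apply isOpen_lt
      · exact hcont.comp continuous_fst
      · exact Continuous.matrix_trace (continuous_subtype_val.comp continuous_snd)
    have hsub : {y : ℝ × SymMat n |
        f y.1 < Matrix.trace (y.2 : Matrix (Fin n) (Fin n) ℝ)} ⊆ F :=
      fun y hy => le_of_lt (Set.mem_setOf_eq ▸ hy)
    apply interior_maximal hsub hopen
    show f (-r) < Matrix.trace (((-A : SymMat n) : Matrix (Fin n) (Fin n) ℝ))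
    have : ((-A : SymMat n) : Matrix (Fin n) (Fin n) ℝ) = -(A : Matrix (Fin n) (Fin n) ℝ) := rfl
    rw [this, Matrix.trace_neg, hodd]
    linarith
  · -- F ⊆ dual
    intro h hmem
    -- consider the path t ↦ (-r, -A - t • E), E the identity
    set E : SymMat n := ⟨(1 : Matrix (Fin n) (Fin n) ℝ), IsSelfAdjoint.one _⟩ with hE
    have hpathc : Continuous fun t : ℝ => ((-r, -A - t • E) : ℝ × SymMat n) := by
      apply Continuous.prodMk continuous_const
      apply Continuous.subtype_mk
        (f := fun t : ℝ => (-(A : Matrix (Fin n) (Fin n) ℝ) - t • (1 : Matrix (Fin n) (Fin n) ℝ)))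
      exact continuous_const.sub (continuous_id.smul continuous_const)
    have h0 : ((-r, -A - (0:ℝ) • E) : ℝ × SymMat n) = (-r, -A) := by simp
    have htend : Filter.Tendsto (fun t : ℝ => ((-r, -A - t • E) : ℝ × SymMat n))
        (nhdsWithin 0 (Set.Ioi 0)) (nhds (-r, -A)) := by
      have := hpathc.continuousAt (x := (0:ℝ))
      rw [ContinuousAt, h0] at this
      exact this.mono_left nhdsWithin_le_nhds
    have hev : ∀ᶠ t in nhdsWithin (0:ℝ) (Set.Ioi 0),
        ((-r, -A - t • E) : ℝ × SymMat n) ∈ interior F :=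
      htend.eventually_mem (isOpen_interior.mem_nhds hmem)
    obtain ⟨t, htF, ht0⟩ := (hev.and self_mem_nhdsWithin).exists
    have htF' : ((-r, -A - t • E) : ℝ × SymMat n) ∈ F := interior_subset htF
    simp only [hF, Set.mem_setOf_eq] at htF'
    have hcoe : (((-A - t • E : SymMat n)) : Matrix (Fin n) (Fin n) ℝ)
        = -(A : Matrix (Fin n) (Fin n) ℝ) - t • (1 : Matrix (Fin n) (Fin n) ℝ) := rfl
    rw [hcoe] at htF'
    rw [Matrix.trace_sub, Matrix.trace_neg, Matrix.trace_smul, Matrix.trace_one, hodd] at htF'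
    have hcard : (Fintype.card (Fin n) : ℝ) ≥ 1 := by
      simp [Fintype.card_fin]
      exact_mod_cast hn
    have ht0' : (0:ℝ) < t := ht0
    simp at htF'
    have hn1 : (1:ℝ) ≤ (n:ℝ) := by exact_mod_cast hn
    nlinarith [htF', ht0', hn1, h]
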